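/- ODE lower barrier: let T > 0, γ > 0, β > 1, C̄ > 0, and let f : [0,T] → ℝ be continuous with f(t) ≥ C̄ for all t ∈ [0,T]. Let Z : [0,T] → ℝ be differentiable with Z(t) > 0 for all t, satisfying Z'(t) = −γ Z(t)^β + f(t) Z(t) + f(t) on [0,T] and Z(0) ≥ (C̄/γ)^{1/(β−1)}. Then Z(t) ≥ (C̄/γ)^{1/(β−1)} for every t ∈ [0,T]. -/
import Mathlib

open Real

/-- ODE lower barrier. -/
theorem ode_lower_barrier (T γ β Cb : ℝ) (hT : 0 < T) (hγ : 0 < γ) (hβ : 1 < β)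
    (hCb : 0 < Cb)
    (f : ℝ → ℝ) (hf : ContinuousOn f (Set.Icc 0 T))
    (hfC : ∀ t ∈ Set.Icc (0 : ℝ) T, Cb ≤ f t)
    (Z : ℝ → ℝ) (hZpos : ∀ t ∈ Set.Icc (0 : ℝ) T, 0 < Z t)
    (hZ : ∀ t ∈ Set.Icc (0 : ℝ) T,
      HasDerivWithinAt Z (-γ * Z t ^ β + f t * Z t + f t) (Set.Icc 0 T) t)
    (hZ0 : (Cb / γ) ^ (1 / (β - 1)) ≤ Z 0) :
    ∀ t ∈ Set.Icc (0 : ℝ) T, (Cb / γ) ^ (1 / (β - 1)) ≤ Z t := by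
  set M : ℝ := (Cb / γ) ^ (1 / (β - 1)) with hMdef
  have hM : 0 < M := rpow_pos_of_pos (div_pos hCb hγ) _
  have hb1 : β - 1 ≠ 0 := by linarith
  have hMpow : M ^ (β - 1) = Cb / γ := by
    rw [hMdef, ← Real.rpow_mul (div_pos hCb hγ).le, one_div_mul_cancel hb1, rpow_one]
  have hMβ : γ * M ^ β = Cb * M := by
    have : M ^ β = M ^ (β - 1) * M := by
      have h := Real.rpow_add hM (β - 1) 1
      rw [sub_add_cancel, Real.rpow_one] at h
      exact h
    rw [this, hMpow]
    field_simp
  have hZcont : ContinuousOn Z (Set.Icc 0 T) :=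
    fun x hx => (hZ x hx).continuousWithinAt
  have key : ∀ ⦃x⦄, x ∈ Set.Icc (0:ℝ) T → -Z x ≤ -M := by
    apply image_le_of_deriv_right_lt_deriv_boundary'
      (f := fun t => -Z t)
      (f' := fun t => -(-γ * Z t ^ β + f t * Z t + f t))
      (B := fun _ => -M) (B' := fun _ => 0)
    · exact hZcont.neg
    · intro x hx
      exact ((hZ x (Set.mem_Icc_of_Ico hx)).mono_of_mem_nhdsWithin
        (Icc_mem_nhdsGE_of_mem hx)).neg
    · simpa using hZ0
    · exact continuousOn_const
    · intro x hx; exact hasDerivWithinAt_const _ _ _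
    · intro x hx hxeq
      have hZx : Z x = M := by linarith [neg_injective hxeq]
      have hfx : Cb ≤ f x := hfC x (Set.mem_Icc_of_Ico hx)
      rw [hZx]
      nlinarith [hM]
  intro t ht
  linarith [key ht]
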